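/- Let (f_ω)_{ω∈Ω} be a uniformly good family of maps on X. Then there exist K>0 and ρ∈(0,1) such that for every n≥0, every ψ∈L^∞(X,m) and every φ∈BV(X,m), one has |∫ 𝓛_ω^{(n)}(φ h_ω) ψ dm − (∫ φ dμ_ω)·(∫ ψ dμ_{σ^n ω})| ≤ K ρ^n ‖ψ‖_∞ ‖φ‖_var for a.e. ω ∈ Ω. -/

import Mathlib

open MeasureTheory Filter ENNReal

noncomputable section

namespace RandomASIP

variable {Ω X : Type*} [MeasurableSpace Ω] [MeasurableSpace X]

/-- The iterated maps `f_ω^n = f_{σ^{n-1}ω} ∘ ⋯ ∘ f_ω`. -/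
def fIter (σ : Ω → Ω) (f : Ω → X → X) (ω : Ω) : ℕ → X → X
  | 0 => id
  | n + 1 => f (σ^[n] ω) ∘ fIter σ f ω n

/-- The iterated transfer operators `𝓛_ω^{(n)} = 𝓛_{σ^{n-1}ω} ∘ ⋯ ∘ 𝓛_ω`. -/
def Lit (σ : Ω → Ω) (L : Ω → (X → ℝ) → X → ℝ) (ω : Ω) : ℕ → (X → ℝ) → X → ℝ
  | 0 => fun φ => φ
  | n + 1 => fun φ => L (σ^[n] ω) (Lit σ L ω n φ)

/-- The BV norm `‖φ‖_BV = var(φ) + ‖φ‖₁`. -/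
def bvNorm (m : Measure X) (var : (X → ℝ) → ℝ≥0∞) (φ : X → ℝ) : ℝ≥0∞ :=
  var φ + eLpNorm φ 1 m

/-- The norm `‖φ‖_var = var(φ) + ‖φ‖_∞`. -/
def varNorm (m : Measure X) (var : (X → ℝ) → ℝ≥0∞) (φ : X → ℝ) : ℝ≥0∞ :=
  var φ + eLpNorm φ ∞ m

/-- Membership in `BV = {φ ∈ L¹(m) : var(φ) < ∞}`. -/
def MemBV (m : Measure X) (var : (X → ℝ) → ℝ≥0∞) (φ : X → ℝ) : Prop :=
  Integrable φ m ∧ var φ < ∞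

/-- The cone `C_a = {φ ∈ BV : φ ≥ 0 and var(φ) ≤ a ∫ φ dm}`. -/
def coneC (m : Measure X) (var : (X → ℝ) → ℝ≥0∞) (a : ℝ) : Set (X → ℝ) :=
  {φ | MemBV m var φ ∧ 0 ≤ᵐ[m] φ ∧ var φ ≤ ENNReal.ofReal (a * ∫ x, φ x ∂m)}

/-- Conditions (V1)–(V8) on the abstract variation functional. -/
structure VariationGood (m : Measure X) (var : (X → ℝ) → ℝ≥0∞) : Prop where
  /-- (V1) -/
  v1 : ∀ (t : ℝ) (h : X → ℝ), var (fun x => t * h x) = ENNReal.ofReal |t| * var h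
  /-- (V2) -/
  v2 : ∀ g h : X → ℝ, var (g + h) ≤ var g + var h
  /-- (V3) -/
  v3 : ∃ Cvar : ℝ, 1 ≤ Cvar ∧ ∀ h : X → ℝ,
        eLpNorm h ∞ m ≤ ENNReal.ofReal Cvar * (eLpNorm h 1 m + var h)
  /-- (V4): `L¹(m)`-compactness of BV-balls, in sequential form -/
  v4 : ∀ C : ℝ≥0∞, ∀ g : ℕ → X → ℝ, (∀ n, eLpNorm (g n) 1 m + var (g n) ≤ C) →
        ∃ (ns : ℕ → ℕ) (φ : X → ℝ), StrictMono ns ∧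
          Tendsto (fun k => eLpNorm (g (ns k) - φ) 1 m) atTop (nhds 0)
  /-- (V5) -/
  v5 : var (fun _ => (1 : ℝ)) < ∞
  /-- (V6) -/
  v6 : ∀ h : X → ℝ, 0 ≤ᵐ[m] h → eLpNorm h 1 m = 1 → ∀ ε : ℝ≥0∞, 0 < ε →
        ∃ g : X → ℝ, 0 ≤ᵐ[m] g ∧ eLpNorm g 1 m = 1 ∧ var g < ∞ ∧ eLpNorm (h - g) 1 m < ε
  /-- (V7) -/
  v7 : ∃ Kvar : ℝ≥0∞, Kvar < ∞ ∧ ∀ g h : X → ℝ,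
        var (g * h) + eLpNorm (g * h) 1 m ≤
          Kvar * (var h + eLpNorm h 1 m) * (var g + eLpNorm g 1 m)
  /-- (V8) -/
  v8 : ∀ g : X → ℝ, 0 < essInf g m →
        var (fun x => 1 / g x) ≤ var g / ENNReal.ofReal (essInf g m) ^ 2

/-- The hypotheses on the random dynamical system: `σ` is an invertible ergodic
measure-preserving map, the `𝓛_ω` are the transfer operators of the `f_ω`, and
the uniformly good conditions (H1)–(H5) hold. -/
structure UniformlyGood (P : Measure Ω) (σ : Ω → Ω) (m : Measure X)
    (var : (X → ℝ) → ℝ≥0∞) (f : Ω → X → X) (L : Ω → (X → ℝ) → X → ℝ) : Prop where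
  sigma_bij : Function.Bijective σ
  sigma_pres : MeasurePreserving σ P P
  sigma_erg : Ergodic σ P
  f_meas : ∀ ω, Measurable (f ω)
  /-- `𝓛_ω` descends to `L¹(m)` -/
  L_congr : ∀ ω (φ₁ φ₂ : X → ℝ), φ₁ =ᵐ[m] φ₂ → L ω φ₁ =ᵐ[m] L ω φ₂
  L_int : ∀ ω (φ : X → ℝ), Integrable φ m → Integrable (L ω φ) m
  /-- the duality relation defining the transfer operator `𝓛_ω` -/
  duality : ∀ ω (φ ψ : X → ℝ), Integrable φ m → Measurable ψ → (∃ c : ℝ, ∀ x, |ψ x| ≤ c) →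
      ∫ x, L ω φ x * ψ x ∂m = ∫ x, φ x * ψ (f ω x) ∂m
  /-- (H1) -/
  h1 : ∀ H : Ω → X → ℝ, Measurable (Function.uncurry H) →
      Measurable fun p : Ω × X => L p.1 (H p.1) p.2
  /-- (H2) -/
  h2 : ∃ C : ℝ, 0 < C ∧ ∀ᵐ ω ∂P, ∀ φ : X → ℝ,
      bvNorm m var (L ω φ) ≤ ENNReal.ofReal C * bvNorm m var φ
  /-- (H3) -/
  h3 : ∀ᵐ ω ∂P, ∃ B : ℝ≥0∞, B < ∞ ∧ ∀ (n : ℕ) (φ : X → ℝ), bvNorm m var φ ≤ 1 →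
      bvNorm m var (φ ∘ f (σ^[n] ω)) ≤ B
  /-- (H4) -/
  h4 : ∃ N : ℕ, 0 < N ∧ ∀ a : ℝ, 0 < a → ∃ n₀ : ℕ, ∀ n, n₀ ≤ n → ∃ c : ℝ, 0 < c ∧
      ∀ᵐ ω ∂P, ∀ g ∈ coneC m var a,
        c / 2 * ∫ x, |g x| ∂m ≤ essInf (Lit σ L ω (N * n) g) m
  /-- (H5) -/
  h5 : ∃ K lam : ℝ, 0 < K ∧ 0 < lam ∧ ∀ᵐ ω ∂P, ∀ (n : ℕ) (φ : X → ℝ), MemBV m var φ →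
      (∫ x, φ x ∂m) = 0 →
      bvNorm m var (Lit σ L ω n φ) ≤ ENNReal.ofReal (K * Real.exp (-lam * n)) * bvNorm m var φ

/-- The properties of the unique random absolutely continuous invariant density `h`. -/
structure IsACIM (P : Measure Ω) (σ : Ω → Ω) (m : Measure X)
    (var : (X → ℝ) → ℝ≥0∞) (L : Ω → (X → ℝ) → X → ℝ) (h : Ω → X → ℝ) : Prop where
  meas : Measurable (Function.uncurry h)
  nonneg : ∀ ω x, 0 ≤ h ω x
  mem_bv : ∀ᵐ ω ∂P, MemBV m var (h ω)
  mass : ∀ᵐ ω ∂P, (∫ x, h ω x ∂m) = 1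
  equiv : ∀ᵐ ω ∂P, L ω (h ω) =ᵐ[m] h (σ ω)
  bdd : ∃ B : ℝ≥0∞, B < ∞ ∧ ∀ᵐ ω ∂P, bvNorm m var (h ω) ≤ B

/-- The fibered measure `μ_ω` with `dμ_ω = h_ω dm`. -/
def muOmega (m : Measure X) (h : Ω → X → ℝ) (ω : Ω) : Measure X :=
  m.withDensity fun x => ENNReal.ofReal (h ω x)

/-- The skew product `τ(ω,x) = (σ ω, f_ω x)`. -/
def tau (σ : Ω → Ω) (f : Ω → X → X) : Ω × X → Ω × X :=
  fun p => (σ p.1, f p.1 p.2)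

/-- The invariant measure `μ` of the skew product, `dμ = h d(ℙ × m)`. -/
def muProd (P : Measure Ω) (m : Measure X) (h : Ω → X → ℝ) : Measure (Ω × X) :=
  (P.prod m).withDensity fun p => ENNReal.ofReal (h p.1 p.2)

/-- The centered observable `ψ̃_ω = ψ_ω − ∫ ψ_ω dμ_ω`. -/
def centered (m : Measure X) (h : Ω → X → ℝ) (ψ : Ω → X → ℝ) (ω : Ω) : X → ℝ :=
  fun x => ψ ω x - ∫ y, ψ ω y ∂(muOmega m h ω)

/-- The functions `G_k` of the martingale decomposition: `G₀ = 0` and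
`G_{k+1} = 𝓛_{σ^k ω}(ψ̃_{σ^k ω} h_{σ^k ω} + G_k h_{σ^k ω}) / h_{σ^{k+1} ω}`. -/
def Gseq (σ : Ω → Ω) (L : Ω → (X → ℝ) → X → ℝ) (h ψt : Ω → X → ℝ) (ω : Ω) : ℕ → X → ℝ
  | 0 => 0
  | k + 1 => fun x =>
      L (σ^[k] ω) (fun y => ψt (σ^[k] ω) y * h (σ^[k] ω) y + Gseq σ L h ψt ω k y * h (σ^[k] ω) y) x /
        h (σ^[k + 1] ω) x

/-- `M_n = ψ̃_{σ^n ω} + G_n − G_{n+1} ∘ f_{σ^n ω}`. -/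
def Mseq (σ : Ω → Ω) (f : Ω → X → X) (L : Ω → (X → ℝ) → X → ℝ)
    (h ψt : Ω → X → ℝ) (ω : Ω) (n : ℕ) : X → ℝ :=
  fun x => ψt (σ^[n] ω) x + Gseq σ L h ψt ω n x - Gseq σ L h ψt ω (n + 1) (f (σ^[n] ω) x)

/-- The σ-algebra `𝓣_ω^n = (f_ω^n)⁻¹(𝓑)`. -/
def Talg (σ : Ω → Ω) (f : Ω → X → X) (ω : Ω) (n : ℕ) : MeasurableSpace X :=
  MeasurableSpace.comap (fIter σ f ω n) inferInstance

end RandomASIP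

namespace RandomASIP

variable {Ω X : Type*} [MeasurableSpace Ω] [MeasurableSpace X]

omit [MeasurableSpace Ω] in
lemma fIter_measurable (σ : Ω → Ω) (f : Ω → X → X) (hf : ∀ ω, Measurable (f ω)) (ω : Ω) :
    ∀ n, Measurable (fIter σ f ω n)
  | 0 => measurable_id
  | n + 1 => (hf _).comp (fIter_measurable σ f hf ω n)

omit [MeasurableSpace Ω] in
lemma Lit_integrable {m : Measure X} (σ : Ω → Ω) (L : Ω → (X → ℝ) → X → ℝ)
    (hL : ∀ ω (φ : X → ℝ), Integrable φ m → Integrable (L ω φ) m) (ω : Ω) (u : X → ℝ)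
    (hu : Integrable u m) : ∀ n, Integrable (Lit σ L ω n u) m
  | 0 => hu
  | n + 1 => hL _ _ (Lit_integrable σ L hL ω u hu n)

omit [MeasurableSpace Ω] in
lemma Lit_congr' {m : Measure X} (σ : Ω → Ω) (L : Ω → (X → ℝ) → X → ℝ)
    (hL : ∀ ω (φ₁ φ₂ : X → ℝ), φ₁ =ᵐ[m] φ₂ → L ω φ₁ =ᵐ[m] L ω φ₂) (ω : Ω) (u v : X → ℝ)
    (huv : u =ᵐ[m] v) : ∀ n, Lit σ L ω n u =ᵐ[m] Lit σ L ω n v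
  | 0 => huv
  | n + 1 => hL _ _ _ (Lit_congr' σ L hL ω u v huv n)

omit [MeasurableSpace Ω] in
lemma Lit_duality {m : Measure X} (σ : Ω → Ω) (f : Ω → X → X) (L : Ω → (X → ℝ) → X → ℝ)
    (hf : ∀ ω, Measurable (f ω))
    (hL : ∀ ω (φ : X → ℝ), Integrable φ m → Integrable (L ω φ) m)
    (hd : ∀ ω (φ ψ : X → ℝ), Integrable φ m → Measurable ψ → (∃ c : ℝ, ∀ x, |ψ x| ≤ c) →
      ∫ x, L ω φ x * ψ x ∂m = ∫ x, φ x * ψ (f ω x) ∂m)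
    (ω : Ω) (u : X → ℝ) (hu : Integrable u m) :
    ∀ (n : ℕ) (ψ : X → ℝ), Measurable ψ → (∃ c : ℝ, ∀ x, |ψ x| ≤ c) →
      ∫ x, Lit σ L ω n u x * ψ x ∂m = ∫ x, u x * ψ (fIter σ f ω n x) ∂m
  | 0, ψ, _, _ => by simp [Lit, fIter]
  | n + 1, ψ, hψ, hb => by
      have h1 : ∫ x, Lit σ L ω (n + 1) u x * ψ x ∂m
          = ∫ x, Lit σ L ω n u x * ψ (f (σ^[n] ω) x) ∂m :=
        hd _ _ ψ (Lit_integrable σ L hL ω u hu n) hψ hb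
      rw [h1]
      have h2 := Lit_duality σ f L hf hL hd ω u hu n (fun x => ψ (f (σ^[n] ω) x))
        (hψ.comp (hf _)) (by obtain ⟨c, hc⟩ := hb; exact ⟨c, fun x => hc _⟩)
      rw [h2]
      rfl

end RandomASIP

namespace RandomASIP

/-- Lemma on quenched decay of correlations: there are `K > 0` and
`ρ ∈ (0,1)` such that for every `n`, every `ψ ∈ L^∞(X,m)` and every `φ ∈ BV`,
`|∫ 𝓛_ω^{(n)}(φ h_ω) ψ dm − ∫ φ dμ_ω ⬝ ∫ ψ dμ_{σ^n ω}| ≤ K ρ^n ‖ψ‖_∞ ‖φ‖_var` for a.e. `ω`. -/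
theorem decay_of_correlations {Ω X : Type*} [MeasurableSpace Ω] [MeasurableSpace X]
    (P : Measure Ω) [IsProbabilityMeasure P] (σ : Ω → Ω)
    (m : Measure X) [IsProbabilityMeasure m] (var : (X → ℝ) → ℝ≥0∞)
    (f : Ω → X → X) (L : Ω → (X → ℝ) → X → ℝ)
    (hvar : VariationGood m var) (hgood : UniformlyGood P σ m var f L)
    (h : Ω → X → ℝ) (hacim : IsACIM P σ m var L h) :
    ∃ K ρ : ℝ, 0 < K ∧ ρ ∈ Set.Ioo (0 : ℝ) 1 ∧
      ∀ (n : ℕ) (ψ φ : X → ℝ), Measurable ψ → eLpNorm ψ ∞ m < ∞ → MemBV m var φ →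
        ∀ᵐ ω ∂P,
          ENNReal.ofReal
              |(∫ x, Lit σ L ω n (fun y => φ y * h ω y) x * ψ x ∂m) -
                (∫ x, φ x ∂(muOmega m h ω)) * ∫ x, ψ x ∂(muOmega m h (σ^[n] ω))| ≤
            ENNReal.ofReal (K * ρ ^ n) * eLpNorm ψ ∞ m * varNorm m var φ := by
  classical
  obtain ⟨K0, lam, hK0, hlam, h5ae⟩ := hgood.h5
  obtain ⟨Kv, hKvfin, hv7⟩ := hvar.v7
  obtain ⟨B, hBfin, hBae⟩ := hacim.bdd
  obtain ⟨Cv, hCv1, hv3⟩ := hvar.v3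
  set C : ℝ≥0∞ := (Kv + 1) * B with hCdef
  have hCfin : C ≠ ∞ := by
    rw [hCdef]
    exact ENNReal.mul_ne_top (by simp [hKvfin.ne]) hBfin.ne
  refine ⟨K0 * (C.toReal + 1), Real.exp (-lam), ?_, ⟨Real.exp_pos _, ?_⟩, ?_⟩
  · have : (0:ℝ) ≤ C.toReal := ENNReal.toReal_nonneg
    positivity
  · rw [Real.exp_lt_one_iff]; linarith
  intro n ψ φ hψm hψfin hφBV
  -- measurability of the sections of h
  have hhm : ∀ ω' : Ω, Measurable (h ω') := fun ω' =>
    hacim.meas.comp measurable_prodMk_left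
  -- pulling back a.e. statements along iterates of σ
  have pull : ∀ (k : ℕ) (p : Ω → Prop), (∀ᵐ ω ∂P, p ω) → ∀ᵐ ω ∂P, p (σ^[k] ω) :=
    fun k p hp => (hgood.sigma_pres.iterate k).quasiMeasurePreserving.ae hp
  have chain : ∀ᵐ ω ∂P, ∀ k : ℕ, L (σ^[k] ω) (h (σ^[k] ω)) =ᵐ[m] h (σ^[k + 1] ω) := by
    rw [ae_all_iff]
    intro k
    filter_upwards [pull k _ hacim.equiv] with ω hω
    rw [Function.iterate_succ_apply']
    exact hω
  -- facts about φ
  have hφint : Integrable φ m := hφBV.1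
  have hφ1 : eLpNorm φ 1 m < ∞ := (memLp_one_iff_integrable.mpr hφint).2
  have hφinf : eLpNorm φ ∞ m < ∞ := by
    refine lt_of_le_of_lt (hv3 φ) (ENNReal.mul_lt_top ?_ ?_)
    · exact ENNReal.ofReal_lt_top
    · exact ENNReal.add_lt_top.2 ⟨hφ1, hφBV.2⟩
  have hVfin : var φ + eLpNorm φ ∞ m < ∞ := ENNReal.add_lt_top.2 ⟨hφBV.2, hφinf⟩
  -- a.e. pointwise bounds from L^∞ norms
  have aebdd : ∀ u : X → ℝ, eLpNorm u ∞ m < ∞ →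
      ∀ᵐ x ∂m, |u x| ≤ (eLpNorm u ∞ m).toReal := by
    intro u hu
    filter_upwards [ae_le_eLpNormEssSup (f := u) (μ := m)] with x hx
    have h2 : ((‖u x‖₊ : ℝ≥0∞)).toReal ≤ (eLpNormEssSup u m).toReal := by
      refine ENNReal.toReal_mono ?_ hx
      rw [← eLpNorm_exponent_top]; exact hu.ne
    rw [eLpNorm_exponent_top]
    calc |u x| = ((‖u x‖₊ : ℝ≥0∞)).toReal := by simp [Real.norm_eq_abs]
      _ ≤ _ := h2
  set bφ := (eLpNorm φ ∞ m).toReal with hbφ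
  have hφbdd : ∀ᵐ x ∂m, |φ x| ≤ bφ := aebdd φ hφinf
  filter_upwards [h5ae, hBae, hacim.mem_bv, hacim.mass, chain]
    with ω hω5 hωB hωbv hωmass hωchain
  -- facts about h ω
  have hhint : Integrable (h ω) m := hωbv.1
  have hφh_int : Integrable (fun y => φ y * h ω y) m :=
    hhint.bdd_mul hφint.aestronglyMeasurable
      (by filter_upwards [hφbdd] with x hx; simpa [Real.norm_eq_abs] using hx)
  set c := ∫ x, φ x * h ω x ∂m with hcdef
  set g : X → ℝ := (fun y => φ y * h ω y) + (fun y => (-c) * h ω y) with hgdef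
  have hgx : ∀ y, g y = φ y * h ω y - c * h ω y := fun y => by
    simp only [hgdef, Pi.add_apply]; ring
  have hch_int : Integrable (fun y => (-c) * h ω y) m := hhint.const_mul _
  have hgint : Integrable g m := hφh_int.add hch_int
  have hgmean : ∫ x, g x ∂m = 0 := by
    simp only [hgdef, Pi.add_apply]
    rw [integral_add hφh_int hch_int, integral_const_mul, hωmass, ← hcdef]
    ring
  -- |c| is controlled by the sup norm of φ
  have hcabs : |c| ≤ bφ := by
    have h1 : |c| ≤ ∫ x, |φ x * h ω x| ∂m := by
      rw [hcdef]
      simpa only [Real.norm_eq_abs] using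
        norm_integral_le_integral_norm (μ := m) (fun x => φ x * h ω x)
    refine h1.trans ?_
    have h2 : ∫ x, |φ x * h ω x| ∂m ≤ ∫ x, bφ * h ω x ∂m := by
      refine integral_mono_ae hφh_int.abs (hhint.const_mul _) ?_
      filter_upwards [hφbdd] with x hx
      rw [abs_mul, abs_of_nonneg (hacim.nonneg ω x)]
      exact mul_le_mul_of_nonneg_right hx (hacim.nonneg ω x)
    refine h2.trans ?_
    rw [integral_const_mul, hωmass, mul_one]
  have hcle : ENNReal.ofReal |c| ≤ eLpNorm φ ∞ m := by
    refine (ENNReal.ofReal_le_ofReal hcabs).trans ?_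
    rw [hbφ, ENNReal.ofReal_toReal hφinf.ne]
  -- BV norm bound for g
  have hmul : (fun y => φ y * h ω y) = φ * h ω := rfl
  have hbvφh : var (fun y => φ y * h ω y) + eLpNorm (fun y => φ y * h ω y) 1 m ≤
      Kv * (var (h ω) + eLpNorm (h ω) 1 m) * (var φ + eLpNorm φ 1 m) := by
    rw [hmul]; exact hv7 φ (h ω)
  have hbvφ : var φ + eLpNorm φ 1 m ≤ var φ + eLpNorm φ ∞ m := by
    gcongr
    exact eLpNorm_le_eLpNorm_of_exponent_le le_top hφint.aestronglyMeasurable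
  have hsmul : (fun y => (-c) * h ω y) = (-c) • (h ω) := rfl
  have hvarg : var g ≤ var (fun y => φ y * h ω y) + ENNReal.ofReal |c| * var (h ω) := by
    refine (hvar.v2 _ _).trans ?_
    gcongr
    rw [hvar.v1 (-c) (h ω), abs_neg]
  have hg1 : eLpNorm g 1 m ≤
      eLpNorm (fun y => φ y * h ω y) 1 m + ENNReal.ofReal |c| * eLpNorm (h ω) 1 m := by
    refine (eLpNorm_add_le hφh_int.aestronglyMeasurable hch_int.aestronglyMeasurable
      le_rfl).trans ?_
    gcongr
    rw [hsmul, eLpNorm_const_smul, Real.enorm_eq_ofReal_abs, abs_neg]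
  have hbvg : var g + eLpNorm g 1 m ≤ C * (var φ + eLpNorm φ ∞ m) := by
    calc var g + eLpNorm g 1 m
        ≤ (var (fun y => φ y * h ω y) + eLpNorm (fun y => φ y * h ω y) 1 m) +
          ENNReal.ofReal |c| * (var (h ω) + eLpNorm (h ω) 1 m) := by
          rw [mul_add]; refine le_trans (add_le_add hvarg hg1) ?_; ring_nf; exact le_rfl
      _ ≤ Kv * (var (h ω) + eLpNorm (h ω) 1 m) * (var φ + eLpNorm φ 1 m) +
          eLpNorm φ ∞ m * (var (h ω) + eLpNorm (h ω) 1 m) := by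
          exact add_le_add hbvφh (mul_le_mul_left hcle _)
      _ ≤ Kv * B * (var φ + eLpNorm φ ∞ m) + (var φ + eLpNorm φ ∞ m) * B := by
          have hB' : var (h ω) + eLpNorm (h ω) 1 m ≤ B := hωB
          have hsn : eLpNorm φ ∞ m ≤ var φ + eLpNorm φ ∞ m := le_add_self
          exact add_le_add (mul_le_mul' (mul_le_mul_right hB' _) hbvφ)
            (mul_le_mul' hsn hB')
      _ = C * (var φ + eLpNorm φ ∞ m) := by rw [hCdef]; ring
  have hgBV : MemBV m var g := by
    refine ⟨hgint, ?_⟩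
    refine lt_of_le_of_lt (le_trans (le_add_right le_rfl) hbvg) ?_
    exact ENNReal.mul_lt_top (lt_top_iff_ne_top.2 hCfin) hVfin
  have hdecay := hω5 n g hgBV hgmean
  simp only [bvNorm] at hdecay
  -- the truncated version of ψ
  set bψ := (eLpNorm ψ ∞ m).toReal with hbψ
  have hbψ0 : 0 ≤ bψ := ENNReal.toReal_nonneg
  set ψ' : X → ℝ := fun x => max (-bψ) (min bψ (ψ x)) with hψ'def
  have hψ'm : Measurable ψ' := measurable_const.max (measurable_const.min hψm)
  have hψ'bdd : ∀ x, |ψ' x| ≤ bψ := fun x => by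
    rw [abs_le]
    exact ⟨le_max_left _ _, max_le (by linarith) (min_le_left _ _)⟩
  have hψae : ψ' =ᵐ[m] ψ := by
    filter_upwards [aebdd ψ hψfin] with x hx
    rw [abs_le] at hx
    simp only [hψ'def]
    rw [min_eq_right hx.2, max_eq_right hx.1]
  -- duality machinery
  have hFm : Measurable (fIter σ f ω n) := fIter_measurable σ f hgood.f_meas ω n
  have hdual : ∀ u : X → ℝ, Integrable u m →
      ∫ x, Lit σ L ω n u x * ψ' x ∂m = ∫ x, u x * ψ' (fIter σ f ω n x) ∂m :=
    fun u hu => Lit_duality σ f L hgood.f_meas hgood.L_int hgood.duality ω u hu n ψ'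
      hψ'm ⟨bψ, hψ'bdd⟩
  have hbd : ∀ u : X → ℝ, Integrable u m →
      Integrable (fun x => u x * ψ' (fIter σ f ω n x)) m := by
    intro u hu
    have := hu.bdd_mul (c := bψ) ((hψ'm.comp hFm).aestronglyMeasurable)
      (Eventually.of_forall fun x => by simpa [Real.norm_eq_abs] using hψ'bdd _)
    exact this.congr (Eventually.of_forall fun x => mul_comm _ _)
  have hLgint : Integrable (Lit σ L ω n g) m := Lit_integrable σ L hgood.L_int ω g hgint n
  have hLh : Lit σ L ω n (h ω) =ᵐ[m] h (σ^[n] ω) := by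
    have key : ∀ k : ℕ, Lit σ L ω k (h ω) =ᵐ[m] h (σ^[k] ω) := by
      intro k
      induction k with
      | zero => rfl
      | succ k ih =>
        show L (σ^[k] ω) (Lit σ L ω k (h ω)) =ᵐ[m] h (σ^[k + 1] ω)
        exact (hgood.L_congr _ _ _ ih).trans (hωchain k)
    exact key n
  -- the main splitting identity
  have hsplit : ∫ x, Lit σ L ω n (fun y => φ y * h ω y) x * ψ x ∂m
      = (∫ x, Lit σ L ω n g x * ψ' x ∂m) + c * ∫ x, h (σ^[n] ω) x * ψ x ∂m := by
    have e1 : ∫ x, Lit σ L ω n (fun y => φ y * h ω y) x * ψ x ∂m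
        = ∫ x, Lit σ L ω n (fun y => φ y * h ω y) x * ψ' x ∂m := by
      refine integral_congr_ae ?_
      filter_upwards [hψae] with x hx
      rw [hx]
    rw [e1, hdual _ hφh_int]
    have e2 : ∫ x, φ x * h ω x * ψ' (fIter σ f ω n x) ∂m
        = (∫ x, g x * ψ' (fIter σ f ω n x) ∂m)
          + c * ∫ x, h ω x * ψ' (fIter σ f ω n x) ∂m := by
      rw [← integral_const_mul, ← integral_add (hbd _ hgint) ((hbd _ hhint).const_mul c)]
      refine integral_congr_ae (Eventually.of_forall fun x => ?_)
      simp only [hgx]; ring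
    rw [e2, ← hdual _ hgint, ← hdual _ hhint]
    congr 1
    congr 1
    refine integral_congr_ae ?_
    filter_upwards [hLh, hψae] with x h1 h2
    rw [h1, h2]
  -- integrals against μ_ω'
  have hwd : ∀ (ω' : Ω) (u : X → ℝ),
      ∫ x, u x ∂(muOmega m h ω') = ∫ x, h ω' x * u x ∂m := by
    intro ω' u
    have hmeas : Measurable fun x => (h ω' x).toNNReal := (hhm ω').real_toNNReal
    have hrw : (fun x => ENNReal.ofReal (h ω' x)) = fun x => ((h ω' x).toNNReal : ℝ≥0∞) := rfl
    rw [muOmega, hrw, integral_withDensity_eq_integral_smul hmeas]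
    refine integral_congr_ae (Eventually.of_forall fun x => ?_)
    simp [NNReal.smul_def, Real.coe_toNNReal _ (hacim.nonneg ω' x)]
  have hφμ : ∫ x, φ x ∂(muOmega m h ω) = c := by
    rw [hwd, hcdef]
    exact integral_congr_ae (Eventually.of_forall fun x => mul_comm _ _)
  have hψμ : ∫ x, ψ x ∂(muOmega m h (σ^[n] ω)) = ∫ x, h (σ^[n] ω) x * ψ x ∂m := hwd _ _
  rw [hsplit, hφμ, hψμ, add_sub_cancel_right]
  -- the quantitative estimate
  have hub : ENNReal.ofReal |∫ x, Lit σ L ω n g x * ψ' x ∂m|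
      ≤ eLpNorm ψ ∞ m * eLpNorm (Lit σ L ω n g) 1 m := by
    have hint : Integrable (fun x => Lit σ L ω n g x * ψ' x) m := by
      have := hLgint.bdd_mul (c := bψ) hψ'm.aestronglyMeasurable
        (Eventually.of_forall fun x => by simpa [Real.norm_eq_abs] using hψ'bdd _)
      exact this.congr (Eventually.of_forall fun x => mul_comm _ _)
    have h1 : |∫ x, Lit σ L ω n g x * ψ' x ∂m| ≤ ∫ x, |Lit σ L ω n g x| * bψ ∂m := by
      have h0 : |∫ x, Lit σ L ω n g x * ψ' x ∂m| ≤ ∫ x, |Lit σ L ω n g x * ψ' x| ∂m := by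
        simpa only [Real.norm_eq_abs] using
          norm_integral_le_integral_norm (μ := m) (fun x => Lit σ L ω n g x * ψ' x)
      refine h0.trans (integral_mono hint.abs (hLgint.abs.mul_const _) fun x => ?_)
      rw [abs_mul]
      exact mul_le_mul_of_nonneg_left (hψ'bdd x) (abs_nonneg _)
    have h2 : ∫ x, |Lit σ L ω n g x| * bψ ∂m = (∫ x, |Lit σ L ω n g x| ∂m) * bψ :=
      integral_mul_const _ _
    have h3 : ENNReal.ofReal (∫ x, |Lit σ L ω n g x| ∂m) = eLpNorm (Lit σ L ω n g) 1 m := by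
      rw [eLpNorm_one_eq_lintegral_enorm,
        ← ofReal_integral_norm_eq_lintegral_enorm hLgint]
      simp [Real.norm_eq_abs]
    calc ENNReal.ofReal |∫ x, Lit σ L ω n g x * ψ' x ∂m|
        ≤ ENNReal.ofReal ((∫ x, |Lit σ L ω n g x| ∂m) * bψ) := by
          refine ENNReal.ofReal_le_ofReal ?_
          rw [← h2]; exact h1
      _ = ENNReal.ofReal (∫ x, |Lit σ L ω n g x| ∂m) * ENNReal.ofReal bψ := by
          rw [ENNReal.ofReal_mul (integral_nonneg fun x => abs_nonneg _)]
      _ = eLpNorm ψ ∞ m * eLpNorm (Lit σ L ω n g) 1 m := by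
          rw [h3, hbψ, ENNReal.ofReal_toReal hψfin.ne, mul_comm]
  have hLg1 : eLpNorm (Lit σ L ω n g) 1 m
      ≤ ENNReal.ofReal (K0 * Real.exp (-lam * n)) * (C * (var φ + eLpNorm φ ∞ m)) := by
    refine le_trans (le_trans le_add_self hdecay) ?_
    exact mul_le_mul_right hbvg _
  have hexp : Real.exp (-lam) ^ n = Real.exp (-lam * n) := by
    rw [← Real.exp_nat_mul]; ring_nf
  have hCle : C ≤ ENNReal.ofReal (C.toReal + 1) := by
    calc C = ENNReal.ofReal C.toReal := (ENNReal.ofReal_toReal hCfin).symm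
      _ ≤ _ := ENNReal.ofReal_le_ofReal (by linarith)
  have hC0 : (0:ℝ) ≤ C.toReal + 1 := by
    have : (0:ℝ) ≤ C.toReal := ENNReal.toReal_nonneg
    linarith
  calc ENNReal.ofReal |∫ x, Lit σ L ω n g x * ψ' x ∂m|
      ≤ eLpNorm ψ ∞ m * eLpNorm (Lit σ L ω n g) 1 m := hub
    _ ≤ eLpNorm ψ ∞ m *
        (ENNReal.ofReal (K0 * Real.exp (-lam * n)) * (C * (var φ + eLpNorm φ ∞ m))) :=
        mul_le_mul_right hLg1 _
    _ ≤ eLpNorm ψ ∞ m * (ENNReal.ofReal (K0 * Real.exp (-lam * n)) *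
        (ENNReal.ofReal (C.toReal + 1) * (var φ + eLpNorm φ ∞ m))) := by gcongr
    _ = ENNReal.ofReal (K0 * (C.toReal + 1) * Real.exp (-lam) ^ n) * eLpNorm ψ ∞ m *
        varNorm m var φ := by
        rw [hexp, varNorm]
        rw [show ENNReal.ofReal (K0 * (C.toReal + 1) * Real.exp (-lam * (n:ℝ)))
            = ENNReal.ofReal K0 * ENNReal.ofReal (C.toReal + 1) *
              ENNReal.ofReal (Real.exp (-lam * (n:ℝ))) from by
          rw [ENNReal.ofReal_mul (mul_nonneg hK0.le hC0), ENNReal.ofReal_mul hK0.le]]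
        rw [show ENNReal.ofReal (K0 * Real.exp (-lam * (n:ℝ)))
            = ENNReal.ofReal K0 * ENNReal.ofReal (Real.exp (-lam * (n:ℝ))) from
          ENNReal.ofReal_mul hK0.le]
        ring


end RandomASIP
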